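/- Let X be an ℝ^{ν₀}-valued random variable on a probability space (Ω, F, P) and let f : ℝ^{ν₀} → ℝ^{d} be Borel measurable. Then there exists a sequence of feedforward neural networks (F_n)_{n∈ℕ} with F_n ∈ Q_n such that for every ε > 0, lim_{n→∞} P(‖F_n(X) − f(X)‖ > ε) = 0. -/

import Mathlib

open Filter MeasureTheory

/-- The sigmoid activation function. -/
noncomputable def sigmoid (z : ℝ) : ℝ := (1 + Real.exp (-z))⁻¹

/-- A fully connected feedforward neural network with `L` hidden layers of common
width `ν`, input dimension `ν₀` and output dimension `k`: the trainable weights and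
biases of each affine layer. -/
structure MLP (L ν ν₀ k : ℕ) where
  w1 : Matrix (Fin ν) (Fin ν₀) ℝ
  b1 : Fin ν → ℝ
  wmid : Fin (L - 1) → Matrix (Fin ν) (Fin ν) ℝ
  bmid : Fin (L - 1) → (Fin ν → ℝ)
  wout : Matrix (Fin k) (Fin ν) ℝ
  bout : Fin k → ℝ

/-- The function computed by an FNN: compositions of affine maps with componentwise
sigmoid activations on the hidden layers, and no activation at the output layer. -/
noncomputable def MLP.eval {L ν ν₀ k : ℕ} (net : MLP L ν ν₀ k)
    (x : Fin ν₀ → ℝ) : Fin k → ℝ :=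
  net.wout.mulVec
    ((List.finRange (L - 1)).foldl
      (fun v i => fun j => sigmoid ((net.wmid i).mulVec v j + net.bmid i j))
      (fun j => sigmoid (net.w1.mulVec x j + net.b1 j)))
    + net.bout

/-- `F` belongs to the class `Q_n` of FNNs with depth `L` and hidden width `ν n`. -/
def InQ (L : ℕ) (ν : ℕ → ℕ) (n ν₀ k : ℕ)
    (F : (Fin ν₀ → ℝ) → (Fin k → ℝ)) : Prop :=
  ∃ net : MLP L (ν n) ν₀ k, F = net.eval

namespace UAux

open ENNReal

lemma sigmoid_denom_pos (z : ℝ) : 0 < 1 + Real.exp (-z) := by positivity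

lemma sigmoid_pos (z : ℝ) : 0 < sigmoid z := by
  unfold sigmoid; positivity

lemma sigmoid_le_one (z : ℝ) : sigmoid z ≤ 1 := by
  unfold sigmoid
  rw [inv_le_one_iff₀]
  right; nlinarith [Real.exp_pos (-z)]

lemma sigmoid_zero : sigmoid 0 = 1/2 := by
  unfold sigmoid; norm_num

lemma one_sub_sigmoid (z : ℝ) : 1 - sigmoid z = sigmoid (-z) := by
  unfold sigmoid
  rw [neg_neg]
  have h1 := sigmoid_denom_pos z
  have h2 := sigmoid_denom_pos (-z)
  rw [neg_neg] at h2
  field_simp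
  rw [add_sub_cancel_left, mul_add, mul_one, ← Real.exp_add]
  simp [add_comm]

lemma sigmoid_mono : Monotone sigmoid := by
  intro a b hab
  unfold sigmoid
  apply inv_anti₀ (sigmoid_denom_pos b)
  have := Real.exp_le_exp.mpr (neg_le_neg hab)
  linarith

lemma sigmoid_le_exp (z : ℝ) : sigmoid z ≤ Real.exp z := by
  unfold sigmoid
  rw [inv_le_comm₀ (sigmoid_denom_pos z) (Real.exp_pos z), ← Real.exp_neg z]
  nlinarith [Real.exp_pos z, Real.exp_pos (-z)]

lemma continuous_sigmoid : Continuous sigmoid := by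
  unfold sigmoid
  fun_prop (disch := intro x; positivity)

lemma sigmoid_binarize {v b K : ℝ} (hb : b = 0 ∨ b = 1) (h : |v - b| ≤ 1/4) (hK : 0 ≤ K) :
    |sigmoid (K * v - K/2) - b| ≤ Real.exp (-(K/4)) := by
  rcases hb with rfl | rfl
  · rw [sub_zero] at h ⊢
    rw [abs_of_pos (sigmoid_pos _)]
    calc sigmoid (K * v - K/2) ≤ Real.exp (K * v - K/2) := sigmoid_le_exp _
      _ ≤ Real.exp (-(K/4)) := by
          apply Real.exp_le_exp.mpr
          have hv : v ≤ 1/4 := by cases abs_le.mp h; linarith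
          nlinarith
  · have h1 : sigmoid (K * v - K/2) ≤ 1 := sigmoid_le_one _
    rw [abs_of_nonpos (by linarith)]
    have : -(sigmoid (K * v - K/2) - 1) = 1 - sigmoid (K * v - K/2) := by ring
    rw [this, one_sub_sigmoid]
    calc sigmoid (-(K * v - K/2)) ≤ Real.exp (-(K * v - K/2)) := sigmoid_le_exp _
      _ ≤ Real.exp (-(K/4)) := by
          apply Real.exp_le_exp.mpr
          have hv : 3/4 ≤ v := by cases abs_le.mp h; linarith
          nlinarith

lemma exists_K (ε : ℝ) (hε : 0 < ε) : ∃ K : ℝ, 0 ≤ K ∧ Real.exp (-(K/4)) ≤ ε := by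
  refine ⟨4 * max (-Real.log ε) 0, by positivity, ?_⟩
  have : -(4 * max (-Real.log ε) 0 / 4) ≤ Real.log ε := by
    have := le_max_left (-Real.log ε) 0
    have h2 : -Real.log ε ≤ max (-Real.log ε) 0 := le_max_left _ _
    nlinarith
  calc Real.exp (-(4 * max (-Real.log ε) 0 / 4)) ≤ Real.exp (Real.log ε) :=
        Real.exp_le_exp.mpr this
    _ = ε := Real.exp_log hε

/-- One-hidden-layer network functions (scalar output, no output bias). -/
noncomputable def olf {m : ℕ} (n : ℕ) (c : Fin n → ℝ) (a : Fin n → Fin m → ℝ)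
    (b : Fin n → ℝ) (x : Fin m → ℝ) : ℝ :=
  ∑ i, c i * sigmoid (∑ j, a i j * x j + b i)

def OneLayer {m : ℕ} (s : (Fin m → ℝ) → ℝ) : Prop :=
  ∃ n c a b, s = olf n c a b

lemma onelayer_const {m : ℕ} (γ : ℝ) : OneLayer (fun _ : Fin m → ℝ => γ) := by
  refine ⟨1, fun _ => 2 * γ, fun _ _ => 0, fun _ => 0, ?_⟩
  funext x
  simp [olf, sigmoid_zero]
  ring

lemma onelayer_add {m : ℕ} {s t : (Fin m → ℝ) → ℝ} (hs : OneLayer s) (ht : OneLayer t) :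
    OneLayer (fun x => s x + t x) := by
  obtain ⟨n1, c1, a1, b1, rfl⟩ := hs
  obtain ⟨n2, c2, a2, b2, rfl⟩ := ht
  refine ⟨n1 + n2, Fin.addCases c1 c2, Fin.addCases a1 a2, Fin.addCases b1 b2, ?_⟩
  funext x
  simp only [olf, Fin.sum_univ_add, Fin.addCases_left, Fin.addCases_right]

lemma onelayer_smul {m : ℕ} (r : ℝ) {s : (Fin m → ℝ) → ℝ} (hs : OneLayer s) :
    OneLayer (fun x => r * s x) := by
  obtain ⟨n, c, a, b, rfl⟩ := hs
  refine ⟨n, fun i => r * c i, a, b, ?_⟩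
  funext x
  simp [olf, Finset.mul_sum, mul_assoc]

lemma onelayer_sum {m : ℕ} {ι : Type*} (F : Finset ι) (g : ι → (Fin m → ℝ) → ℝ)
    (h : ∀ i ∈ F, OneLayer (g i)) : OneLayer (fun x => ∑ i ∈ F, g i x) := by
  classical
  induction F using Finset.induction with
  | empty => simpa using onelayer_const (m := m) 0
  | @insert a F' hnotmem ih =>
    simp only [Finset.sum_insert hnotmem]
    exact onelayer_add (h a (Finset.mem_insert_self _ _))
      (ih fun i hi => h i (Finset.mem_insert_of_mem hi))

lemma onelayer_ridge {m : ℕ} (n : ℕ) (c k t : Fin n → ℝ) (w : Fin m → ℝ) :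
    OneLayer (fun x => ∑ i, c i * sigmoid (k i * (∑ j, w j * x j) + t i)) := by
  refine ⟨n, c, fun i j => k i * w j, t, ?_⟩
  funext x
  simp only [olf]
  refine Finset.sum_congr rfl fun i _ => ?_
  have : k i * (∑ j, w j * x j) = ∑ j, k i * w j * x j := by
    rw [Finset.mul_sum]; exact Finset.sum_congr rfl fun j _ => by ring
  rw [this]


lemma exists_exp_le (c : ℝ) (hc : 0 < c) : ∃ K : ℝ, 0 ≤ K ∧ Real.exp (-K) ≤ c := by
  refine ⟨max (-Real.log c) 0, le_max_right _ _, ?_⟩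
  calc Real.exp (-max (-Real.log c) 0) ≤ Real.exp (Real.log c) := by
        apply Real.exp_le_exp.mpr
        have := le_max_left (-Real.log c) 0
        linarith
    _ = c := Real.exp_log hc

set_option maxHeartbeats 1000000 in
/-- Step-function approximation of a continuous function on `[-R, R]` by a
one-hidden-layer sigmoid sum. -/
lemma step_approx (ψ : ℝ → ℝ) (hψ : Continuous ψ) (R ε : ℝ) (hR : 1 ≤ R) (hε : 0 < ε) :
    ∃ (n : ℕ) (c k t : Fin n → ℝ), ∀ u ∈ Set.Icc (-R) R,
      |(∑ i, c i * sigmoid (k i * u + t i)) - ψ u| ≤ ε := by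
  classical
  have hRpos : (0:ℝ) < R := by linarith
  -- uniform continuity
  have hUC : UniformContinuousOn ψ (Set.Icc (-R) R) :=
    (isCompact_Icc.uniformContinuousOn_of_continuous (hψ.continuousOn))
  rw [Metric.uniformContinuousOn_iff_le] at hUC
  obtain ⟨δ, hδpos, hδ⟩ := hUC (ε/4) (by linarith)
  -- grid
  set n : ℕ := ⌈2*R/δ⌉₊ with hn_def
  have hn : 0 < n := Nat.ceil_pos.mpr (by positivity)
  have hnR : (0:ℝ) < n := Nat.cast_pos.mpr hn
  set h : ℝ := 2*R/n with hh_def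
  have hhpos : 0 < h := by positivity
  have hhδ : h ≤ δ := by
    rw [hh_def, div_le_iff₀ hnR]
    have h1 : 2*R/δ ≤ (n:ℝ) := Nat.le_ceil _
    calc 2*R = (2*R/δ) * δ := by field_simp
      _ ≤ (n:ℝ) * δ := by nlinarith
      _ = δ * n := by ring
  set T : ℕ → ℝ := fun i => -R + i*h with hT_def
  have hT0 : T 0 = -R := by simp [hT_def]
  have hTn : T n = R := by
    simp only [hT_def, hh_def]
    field_simp
    ring
  have hTmono : ∀ i j : ℕ, i ≤ j → T i ≤ T j := by
    intro i j hij
    simp only [hT_def]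
    have : (i:ℝ) ≤ j := Nat.cast_le.mpr hij
    nlinarith
  have hTsucc : ∀ i : ℕ, T (i+1) = T i + h := by
    intro i; simp only [hT_def]; push_cast; ring
  have hTmem : ∀ i : ℕ, i ≤ n → T i ∈ Set.Icc (-R) R := by
    intro i hi
    constructor
    · rw [← hT0]; exact hTmono 0 i (Nat.zero_le _)
    · rw [← hTn]; exact hTmono i n hi
  -- increments are small
  have hΔ : ∀ i : ℕ, i < n → |ψ (T (i+1)) - ψ (T i)| ≤ ε/4 := by
    intro i hi
    have h1 := hδ (T (i+1)) (hTmem _ hi) (T i) (hTmem _ (le_of_lt hi))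
    rw [Real.dist_eq, Real.dist_eq] at h1
    apply h1
    rw [hTsucc]
    rw [abs_of_nonneg (by linarith)]
    simpa using hhδ
  -- sharpness
  obtain ⟨K0, hK0, hE⟩ := exists_exp_le (2/((n:ℝ)+1)) (by positivity)
  set E : ℝ := Real.exp (-K0) with hE_def
  have hEpos : 0 < E := Real.exp_pos _
  set sl : ℝ := 2*K0/h with hsl_def
  have hslnn : 0 ≤ sl := by positivity
  have hslh : sl * (h/2) = K0 := by rw [hsl_def]; field_simp
  clear_value sl E T h n
  -- the network
  refine ⟨n+1,
    Fin.cons (2 * ψ (-R)) (fun i : Fin n => ψ (T (i+1)) - ψ (T i)),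
    Fin.cons 0 (fun _ : Fin n => sl),
    Fin.cons 0 (fun i : Fin n => -sl * (T i + h/2)), ?_⟩
  intro u hu
  rw [Fin.sum_univ_succ]
  simp only [Fin.cons_zero, Fin.cons_succ]
  have hconst : 2 * ψ (-R) * sigmoid (0 * u + 0) = ψ (-R) := by
    norm_num [sigmoid_zero]; ring
  rw [hconst, Fin.sum_univ_eq_sum_range
    (fun i => (ψ (T (i+1)) - ψ (T i)) * sigmoid (sl * u + -sl * (T i + h/2)))]
  -- abbreviations
  set g : ℕ → ℝ := fun i => sigmoid (sl * u + -sl * (T i + h/2)) with hg_def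
  set Δ : ℕ → ℝ := fun i => ψ (T (i+1)) - ψ (T i) with hΔ_def
  set J : ℕ := ((Finset.range n).filter (fun i => T (i+1) ≤ u)).card with hJ_def
  have hJn : J ≤ n := by
    rw [hJ_def]
    exact le_trans (Finset.card_filter_le _ _) (by simp)
  -- characterization of J
  have hdir1 : ∀ i, i < J → T (i+1) ≤ u := by
    intro i hiJ
    by_contra hP
    have hsub : (Finset.range n).filter (fun i => T (i+1) ≤ u) ⊆ Finset.range i := by
      intro j hj
      simp only [Finset.mem_filter, Finset.mem_range] at hj
      rw [Finset.mem_range]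
      by_contra hji
      push_neg at hji
      exact hP (le_trans (hTmono (i+1) (j+1) (by omega)) hj.2)
    have h5 := Finset.card_le_card hsub
    rw [← hJ_def] at h5
    simp only [Finset.card_range] at h5
    omega
  have hdir2 : ∀ i, i < n → T (i+1) ≤ u → i < J := by
    intro i hin hP
    have hsub : Finset.range (i+1) ⊆ (Finset.range n).filter (fun i => T (i+1) ≤ u) := by
      intro j hj
      rw [Finset.mem_range] at hj
      simp only [Finset.mem_filter, Finset.mem_range]
      exact ⟨by omega, le_trans (hTmono (j+1) (i+1) (by omega)) hP⟩
    have h5 := Finset.card_le_card hsub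
    rw [← hJ_def] at h5
    simp only [Finset.card_range] at h5
    omega
  have hfilter : (Finset.range n).filter (fun i => T (i+1) ≤ u) = Finset.range J := by
    ext i
    simp only [Finset.mem_filter, Finset.mem_range]
    constructor
    · rintro ⟨hin, hP⟩; exact hdir2 i hin hP
    · intro hiJ; exact ⟨by omega, hdir1 i hiJ⟩
  change |ψ (-R) + (∑ i ∈ Finset.range n, Δ i * g i) - ψ u| ≤ ε
  clear_value J g Δ
  have hΔ2 : ∀ i, i < n → |Δ i| ≤ ε/4 := by
    intro i hi
    rw [hΔ_def]
    simpa using hΔ i hi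
  have hTJ_le : T J ≤ u := by
    rcases Nat.eq_zero_or_pos J with hJ0 | hJpos
    · rw [hJ0, hT0]; exact hu.1
    · obtain ⟨J', hJ'⟩ : ∃ J', J = J' + 1 := ⟨J - 1, by omega⟩
      rw [hJ', hTsucc]
      have := hdir1 J' (by omega)
      rw [hTsucc] at this
      exact this
  have hu_le : u ≤ T J + h := by
    rcases Nat.lt_or_ge J n with hJlt | hJge
    · have : ¬ T (J+1) ≤ u := by
        intro hP
        exact absurd (hdir2 J hJlt hP) (lt_irrefl J)
      rw [← hTsucc]; linarith [not_le.mp this]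
    · have hJeq : J = n := le_antisymm hJn hJge
      rw [hJeq, hTn]
      have := hu.2
      linarith
  have hψJ : |ψ (T J) - ψ u| ≤ ε/4 := by
    have h1 := hδ (T J) (hTmem _ hJn) u hu
    rw [Real.dist_eq] at h1
    apply h1
    rw [abs_of_nonpos (by linarith)]
    linarith
  -- telescoping
  have htel : ∑ i ∈ Finset.range n, Δ i * (if T (i+1) ≤ u then (1:ℝ) else 0)
      = ψ (T J) - ψ (T 0) := by
    simp only [mul_ite, mul_one, mul_zero]
    rw [← Finset.sum_filter, hfilter]
    simpa [hΔ_def] using Finset.sum_range_sub (fun i => ψ (T i)) J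
  -- decomposition
  have hdecomp : ψ (-R) + (∑ i ∈ Finset.range n, Δ i * g i) - ψ u
      = (∑ i ∈ Finset.range n, Δ i * (g i - (if T (i+1) ≤ u then (1:ℝ) else 0)))
        + (ψ (T J) - ψ u) := by
    have : ∑ i ∈ Finset.range n, Δ i * (g i - (if T (i+1) ≤ u then (1:ℝ) else 0))
        = (∑ i ∈ Finset.range n, Δ i * g i)
          - ∑ i ∈ Finset.range n, Δ i * (if T (i+1) ≤ u then (1:ℝ) else 0) := by
      rw [← Finset.sum_sub_distrib]
      exact Finset.sum_congr rfl fun i _ => by ring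
    rw [this, htel, hT0]
    ring
  rw [hdecomp]
  -- per-term bounds
  have hterm : ∀ i ∈ Finset.range n,
      |Δ i * (g i - (if T (i+1) ≤ u then (1:ℝ) else 0))|
        ≤ (ε/4) * E + (if i = J then ε/4 else 0) := by
    intro i hi
    rw [Finset.mem_range] at hi
    rw [abs_mul]
    have hΔi : |Δ i| ≤ ε/4 := hΔ2 i hi
    have hΔnn : (0:ℝ) ≤ |Δ i| := abs_nonneg _
    rcases lt_trichotomy i J with hiJ | hiJ | hiJ
    · -- i < J : g i close to 1
      have hP : T (i+1) ≤ u := hdir1 i hiJ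
      rw [if_pos hP]
      have harg : sl * u + -sl * (T i + h/2) ≥ K0 := by
        have h1 : u - (T i + h/2) ≥ h/2 := by
          have : T (i+1) ≤ T J := hTmono _ _ (by omega)
          rw [hTsucc] at this
          linarith
        have h2 : sl * (u - (T i + h/2)) ≥ sl * (h/2) := by
          apply mul_le_mul_of_nonneg_left h1 hslnn
        have h4 : sl * (u - (T i + h/2)) = sl * u + -sl * (T i + h/2) := by ring
        linarith
      have hgi : |g i - 1| ≤ E := by
        have hle1 := sigmoid_le_one (sl * u + -sl * (T i + h/2))
        rw [abs_of_nonpos (by simp only [hg_def]; linarith)]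
        have : -(g i - 1) = 1 - g i := by ring
        rw [this]
        simp only [hg_def]
        rw [one_sub_sigmoid]
        calc sigmoid (-(sl * u + -sl * (T i + h/2)))
            ≤ Real.exp (-(sl * u + -sl * (T i + h/2))) := sigmoid_le_exp _
          _ ≤ Real.exp (-K0) := Real.exp_le_exp.mpr (by linarith)
          _ = E := hE_def.symm
      rw [if_neg (by omega : ¬ i = J)]
      calc |Δ i| * |g i - 1| ≤ (ε/4) * E := by
            apply mul_le_mul hΔi hgi (abs_nonneg _) (by linarith)
        _ ≤ (ε/4) * E + 0 := by linarith
    · -- i = J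
      have hP : ¬ T (i+1) ≤ u := by
        intro hP
        have := hdir2 i hi hP
        omega
      rw [if_neg hP, if_pos hiJ, sub_zero]
      have hgi : |g i| ≤ 1 := by
        simp only [hg_def]
        rw [abs_of_pos (sigmoid_pos _)]
        exact sigmoid_le_one _
      calc |Δ i| * |g i| ≤ (ε/4) * 1 := mul_le_mul hΔi hgi (abs_nonneg _) (by linarith)
        _ ≤ (ε/4) * E + ε/4 := by nlinarith
    · -- i > J : g i close to 0
      have hP : ¬ T (i+1) ≤ u := by
        intro hP
        exact absurd (hdir2 i hi hP) (by omega)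
      rw [if_neg hP, sub_zero]
      have harg : sl * u + -sl * (T i + h/2) ≤ -K0 := by
        have h1 : (T i + h/2) - u ≥ h/2 := by
          have hJ1 : T (J+1) ≤ T i := hTmono _ _ (by omega)
          rw [hTsucc] at hJ1
          linarith
        have h2 : sl * ((T i + h/2) - u) ≥ sl * (h/2) :=
          mul_le_mul_of_nonneg_left h1 hslnn
        have h4 : sl * ((T i + h/2) - u) = -(sl * u + -sl * (T i + h/2)) := by ring
        linarith
      have hgi : |g i| ≤ E := by
        simp only [hg_def]
        rw [abs_of_pos (sigmoid_pos _)]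
        calc sigmoid (sl * u + -sl * (T i + h/2))
            ≤ Real.exp (sl * u + -sl * (T i + h/2)) := sigmoid_le_exp _
          _ ≤ Real.exp (-K0) := Real.exp_le_exp.mpr harg
          _ = E := hE_def.symm
      rw [if_neg (by omega : ¬ i = J)]
      calc |Δ i| * |g i| ≤ (ε/4) * E := mul_le_mul hΔi hgi (abs_nonneg _) (by linarith)
        _ ≤ (ε/4) * E + 0 := by linarith
  -- sum the bounds
  have hsumbound : |∑ i ∈ Finset.range n, Δ i * (g i - (if T (i+1) ≤ u then (1:ℝ) else 0))|
      ≤ (n:ℝ) * ((ε/4) * E) + ε/4 := by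
    calc |∑ i ∈ Finset.range n, Δ i * (g i - (if T (i+1) ≤ u then (1:ℝ) else 0))|
        ≤ ∑ i ∈ Finset.range n, |Δ i * (g i - (if T (i+1) ≤ u then (1:ℝ) else 0))| :=
          Finset.abs_sum_le_sum_abs _ _
      _ ≤ ∑ i ∈ Finset.range n, ((ε/4) * E + (if i = J then ε/4 else 0)) :=
          Finset.sum_le_sum hterm
      _ = (n:ℝ) * ((ε/4) * E) + ∑ i ∈ Finset.range n, (if i = J then ε/4 else 0) := by
          rw [Finset.sum_add_distrib, Finset.sum_const, Finset.card_range]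
          ring_nf
      _ = (n:ℝ) * ((ε/4) * E) + (if J ∈ Finset.range n then ε/4 else 0) := by
          rw [Finset.sum_ite_eq']
      _ ≤ (n:ℝ) * ((ε/4) * E) + ε/4 := by
          split_ifs <;> linarith
  have hmain : (n:ℝ) * ((ε/4) * E) ≤ ε/2 := by
    have h1 : E ≤ 2/((n:ℝ)+1) := hE
    have h2 : (n:ℝ) * ((ε/4) * E) ≤ (n:ℝ) * ((ε/4) * (2/((n:ℝ)+1))) := by
      apply mul_le_mul_of_nonneg_left _ (le_of_lt hnR)
      apply mul_le_mul_of_nonneg_left h1 (by linarith)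
    have hpos : (0:ℝ) < (n:ℝ)+1 := by linarith
    have h3 : (n:ℝ) * ((ε/4) * (2/((n:ℝ)+1))) ≤ ε/2 := by
      rw [show (n:ℝ) * ((ε/4) * (2/((n:ℝ)+1))) = (ε/2) * ((n:ℝ)/((n:ℝ)+1)) by
        field_simp; ring]
      have h4 : (n:ℝ)/((n:ℝ)+1) ≤ 1 := by rw [div_le_one hpos]; linarith
      nlinarith
    linarith
  calc |(∑ i ∈ Finset.range n, Δ i * (g i - (if T (i+1) ≤ u then (1:ℝ) else 0)))
      + (ψ (T J) - ψ u)|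
      ≤ |∑ i ∈ Finset.range n, Δ i * (g i - (if T (i+1) ≤ u then (1:ℝ) else 0))|
        + |ψ (T J) - ψ u| := abs_add_le _ _
    _ ≤ ((n:ℝ) * ((ε/4) * E) + ε/4) + ε/4 := add_le_add hsumbound hψJ
    _ ≤ ε := by linarith


variable {m : ℕ}

/-- The cosine ridge function as a continuous map on the closed ball. -/
noncomputable def cosRidge (B : Set (Fin m → ℝ)) (w : Fin m → ℝ) (θ : ℝ) : C(B, ℝ) :=
  ⟨fun x => Real.cos ((∑ j, w j * (x : Fin m → ℝ) j) + θ), by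
    apply Real.continuous_cos.comp
    apply Continuous.add _ continuous_const
    exact continuous_finset_sum _ fun j _ =>
      (continuous_const.mul ((continuous_apply j).comp continuous_subtype_val))⟩

lemma sw_approx (φ : (Fin m → ℝ) → ℝ) (hφ : Continuous φ) (R ε : ℝ)
    (hR : 0 < R) (hε : 0 < ε) :
    ∃ s, OneLayer (m := m) s ∧
      ∀ x ∈ Metric.closedBall (0 : Fin m → ℝ) R, |s x - φ x| ≤ ε := by
  classical
  set B : Set (Fin m → ℝ) := Metric.closedBall 0 R with hB_def
  haveI : CompactSpace B := isCompact_iff_compactSpace.mp (isCompact_closedBall _ _)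
  set gen : Set C(B, ℝ) := {g | ∃ w θ, g = cosRidge B w θ} with hgen_def
  set S : Submodule ℝ C(B, ℝ) := Submodule.span ℝ gen with hS_def
  have hgen_mem : ∀ w θ, cosRidge B w θ ∈ S :=
    fun w θ => Submodule.subset_span ⟨w, θ, rfl⟩
  have hone : (1 : C(B, ℝ)) ∈ S := by
    have : (1 : C(B, ℝ)) = cosRidge B 0 0 := by
      ext x
      simp [cosRidge]
    rw [this]; exact hgen_mem 0 0
  -- product-to-sum: products of generators stay in S
  have hprod : ∀ (w1 : Fin m → ℝ) (θ1 : ℝ) (w2 : Fin m → ℝ) (θ2 : ℝ),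
      (cosRidge B w1 θ1) * (cosRidge B w2 θ2) ∈ S := by
    intro w1 θ1 w2 θ2
    have key : (cosRidge B w1 θ1) * (cosRidge B w2 θ2)
        = (1/2 : ℝ) • cosRidge B (w1 + w2) (θ1 + θ2)
          + (1/2 : ℝ) • cosRidge B (w1 - w2) (θ1 - θ2) := by
      ext x
      simp only [ContinuousMap.mul_apply, ContinuousMap.add_apply,
        ContinuousMap.smul_apply, smul_eq_mul, cosRidge, ContinuousMap.coe_mk]
      have h1 : ∑ j, (w1 + w2) j * (x : Fin m → ℝ) j
          = (∑ j, w1 j * (x : Fin m → ℝ) j) + ∑ j, w2 j * (x : Fin m → ℝ) j := by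
        rw [← Finset.sum_add_distrib]
        exact Finset.sum_congr rfl fun j _ => by simp [add_mul]
      have h2 : ∑ j, (w1 - w2) j * (x : Fin m → ℝ) j
          = (∑ j, w1 j * (x : Fin m → ℝ) j) - ∑ j, w2 j * (x : Fin m → ℝ) j := by
        rw [← Finset.sum_sub_distrib]
        exact Finset.sum_congr rfl fun j _ => by simp [sub_mul]
      rw [h1, h2]
      set a := ∑ j, w1 j * (x : Fin m → ℝ) j
      set b := ∑ j, w2 j * (x : Fin m → ℝ) j
      rw [show a + b + (θ1 + θ2) = (a + θ1) + (b + θ2) by ring,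
        show a - b + (θ1 - θ2) = (a + θ1) - (b + θ2) by ring,
        Real.cos_add (a + θ1) (b + θ2), Real.cos_sub (a + θ1) (b + θ2)]
      ring
    rw [key]
    exact S.add_mem (S.smul_mem _ (hgen_mem _ _)) (S.smul_mem _ (hgen_mem _ _))
  have hmul : ∀ x y : C(B, ℝ), x ∈ S → y ∈ S → x * y ∈ S := by
    intro x y hx hy
    induction hx using Submodule.span_induction with
    | mem g hg =>
      induction hy using Submodule.span_induction with
      | mem g' hg' =>
        obtain ⟨w1, θ1, rfl⟩ := hg
        obtain ⟨w2, θ2, rfl⟩ := hg'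
        exact hprod w1 θ1 w2 θ2
      | zero => simpa using S.zero_mem
      | add a b ha hb iha ihb => rw [mul_add]; exact S.add_mem iha ihb
      | smul r a ha iha => rw [mul_smul_comm]; exact S.smul_mem r iha
    | zero => simpa using S.zero_mem
    | add a b ha hb iha ihb => rw [add_mul]; exact S.add_mem iha ihb
    | smul r a ha iha => rw [smul_mul_assoc]; exact S.smul_mem r iha
  -- make it a subalgebra
  set A : Subalgebra ℝ C(B, ℝ) := Submodule.toSubalgebra S hone hmul with hA_def
  -- separates points
  have hsep : A.SeparatesPoints := by
    intro x y hxy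
    have hj : ∃ j, (x : Fin m → ℝ) j ≠ (y : Fin m → ℝ) j := by
      by_contra hc
      push_neg at hc
      exact hxy (Subtype.ext (funext hc))
    obtain ⟨j, hj⟩ := hj
    set a := (x : Fin m → ℝ) j
    set b := (y : Fin m → ℝ) j
    set t : ℝ := (Real.pi/2) / (max |a| |b| + 1) with ht_def
    have hmaxpos : 0 < max |a| |b| + 1 := by positivity
    have htpos : 0 < t := by
      rw [ht_def]; positivity
    have hbound : ∀ u : ℝ, |u| ≤ max |a| |b| → t * u ∈ Set.Icc (-(Real.pi/2)) (Real.pi/2) := by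
      intro u hu
      have h1 : |t * u| ≤ Real.pi/2 := by
        rw [abs_mul, abs_of_pos htpos]
        calc t * |u| ≤ t * (max |a| |b| + 1) := by nlinarith
          _ = Real.pi/2 := by rw [ht_def]; field_simp
      rw [abs_le] at h1
      exact ⟨h1.1, h1.2⟩
    set w : Fin m → ℝ := fun j' => if j' = j then t else 0 with hw_def
    have hwsum : ∀ z : Fin m → ℝ, ∑ j', w j' * z j' = t * z j := by
      intro z
      rw [hw_def]
      rw [Finset.sum_eq_single j]
      · simp
      · intro j' _ hj'; simp [hj']
      · intro h; exact absurd (Finset.mem_univ j) h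
    refine ⟨cosRidge B w (-(Real.pi/2)), ?_, ?_⟩
    · exact ⟨_, hgen_mem w _, rfl⟩
    · simp only [cosRidge, ContinuousMap.coe_mk]
      rw [hwsum, hwsum]
      rw [show t * a + -(Real.pi/2) = t * a - Real.pi/2 by ring,
        show t * b + -(Real.pi/2) = t * b - Real.pi/2 by ring,
        Real.cos_sub_pi_div_two, Real.cos_sub_pi_div_two]
      intro hc
      have hinj := Real.strictMonoOn_sin.injOn
      have hmem1 := hbound a (le_max_left _ _)
      have hmem2 := hbound b (le_max_right _ _)
      have h6 := hinj hmem1 hmem2 hc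
      exact hj (mul_left_cancel₀ (ne_of_gt htpos) h6)
  have hdense := ContinuousMap.subalgebra_topologicalClosure_eq_top_of_separatesPoints A hsep
  -- extract a finite cosine combination close to φ on B
  set φB : C(B, ℝ) := ⟨fun x => φ x, hφ.comp continuous_subtype_val⟩ with hφB_def
  have hclos : φB ∈ closure (A : Set C(B, ℝ)) := by
    have : φB ∈ A.topologicalClosure := by rw [hdense]; trivial
    exact this
  rw [Metric.mem_closure_iff] at hclos
  obtain ⟨g, hgA, hgdist⟩ := hclos (ε/2) (by linarith)
  have hgS : g ∈ Submodule.span ℝ gen := hgA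
  rw [Submodule.mem_span_set'] at hgS
  obtain ⟨q, f, gg, hgg⟩ := hgS
  choose w θ hwθ using fun i => (gg i).2
  have hgval : ∀ (x : B), g x = ∑ i, f i * Real.cos ((∑ j, w i j * (x : Fin m → ℝ) j) + θ i) := by
    intro x
    rw [← hgg]
    rw [ContinuousMap.sum_apply]
    refine Finset.sum_congr rfl fun i _ => ?_
    rw [ContinuousMap.smul_apply, smul_eq_mul]
    congr 1
    rw [hwθ i]
    rfl
  set C0 : ℝ := ∑ i, |f i| with hC0_def
  have hC0 : 0 ≤ C0 := Finset.sum_nonneg fun i _ => abs_nonneg _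
  set η : ℝ := ε/(2*C0+2) with hη_def
  have hηpos : 0 < η := by rw [hη_def]; positivity
  have hxj : ∀ x ∈ B, ∀ j : Fin m, |x j| ≤ R := by
    intro x hx j
    have h1 : dist x 0 ≤ R := Metric.mem_closedBall.mp hx
    have h2 : dist (x j) ((0 : Fin m → ℝ) j) ≤ dist x 0 := dist_le_pi_dist x 0 j
    have h3 : dist (x j) ((0 : Fin m → ℝ) j) = |x j| := by
      simp [Real.dist_eq]
    linarith
  have hstep : ∀ i : Fin q, ∃ s, OneLayer (m := m) s ∧
      ∀ x ∈ B, |s x - Real.cos ((∑ j, w i j * x j) + θ i)| ≤ η := by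
    intro i
    set Rb : ℝ := max ((∑ j, |w i j|) * R) 1 with hRb_def
    obtain ⟨n, c, k, t, hnet⟩ := step_approx (fun u => Real.cos (u + θ i))
      (Real.continuous_cos.comp (continuous_id.add continuous_const)) Rb η
      (le_max_right _ _) hηpos
    refine ⟨fun x => ∑ l, c l * sigmoid (k l * (∑ j, w i j * x j) + t l),
      onelayer_ridge n c k t (w i), ?_⟩
    intro x hx
    exact hnet _ (by
      have h1 : |∑ j, w i j * x j| ≤ (∑ j, |w i j|) * R := by
        calc |∑ j, w i j * x j| ≤ ∑ j, |w i j * x j| := Finset.abs_sum_le_sum_abs _ _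
          _ ≤ ∑ j, |w i j| * R := by
              refine Finset.sum_le_sum fun j _ => ?_
              rw [abs_mul]
              exact mul_le_mul_of_nonneg_left (hxj x hx j) (abs_nonneg _)
          _ = (∑ j, |w i j|) * R := (Finset.sum_mul _ _ _).symm
      have h2 : |∑ j, w i j * x j| ≤ Rb := le_trans h1 (le_max_left _ _)
      rw [abs_le] at h2
      exact ⟨h2.1, h2.2⟩)
  choose s hsOL hsapp using hstep
  refine ⟨fun x => ∑ i, f i * s i x,
    onelayer_sum Finset.univ _ (fun i _ => onelayer_smul _ (hsOL i)), ?_⟩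
  intro x hx
  have hφg : |g ⟨x, hx⟩ - φ x| ≤ ε/2 := by
    have h1 : dist (φB ⟨x, hx⟩) (g ⟨x, hx⟩) ≤ dist φB g := ContinuousMap.dist_apply_le_dist _
    have h2 : φB ⟨x, hx⟩ = φ x := rfl
    rw [h2, Real.dist_eq] at h1
    rw [abs_sub_comm]
    linarith
  have hsg : |(∑ i, f i * s i x) - g ⟨x, hx⟩| ≤ C0 * η := by
    rw [hgval ⟨x, hx⟩]
    rw [← Finset.sum_sub_distrib]
    calc |∑ i, (f i * s i x - f i * Real.cos ((∑ j, w i j * x j) + θ i))|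
        ≤ ∑ i, |f i * s i x - f i * Real.cos ((∑ j, w i j * x j) + θ i)| :=
          Finset.abs_sum_le_sum_abs _ _
      _ ≤ ∑ i, |f i| * η := by
          refine Finset.sum_le_sum fun i _ => ?_
          rw [show f i * s i x - f i * Real.cos ((∑ j, w i j * x j) + θ i)
            = f i * (s i x - Real.cos ((∑ j, w i j * x j) + θ i)) by ring, abs_mul]
          exact mul_le_mul_of_nonneg_left (hsapp i x hx) (abs_nonneg _)
      _ = C0 * η := by rw [← Finset.sum_mul]
  have hC0η : C0 * η ≤ ε/2 := by
    rw [hη_def]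
    rw [show C0 * (ε/(2*C0+2)) = (ε/2) * (C0 * (C0+1)⁻¹) by
      rw [div_eq_mul_inv, div_eq_mul_inv]
      rw [show 2*C0+2 = 2*(C0+1) by ring, mul_inv]
      ring]
    have h4 : C0 * (C0+1)⁻¹ ≤ 1 := by
      rw [← div_eq_mul_inv, div_le_one (by linarith)]
      linarith
    nlinarith
  calc |(∑ i, f i * s i x) - φ x|
      = |((∑ i, f i * s i x) - g ⟨x, hx⟩) + (g ⟨x, hx⟩ - φ x)| := by ring_nf
    _ ≤ |(∑ i, f i * s i x) - g ⟨x, hx⟩| + |g ⟨x, hx⟩ - φ x| := abs_add_le _ _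
    _ ≤ C0 * η + ε/2 := add_le_add hsg hφg
    _ ≤ ε := by linarith


lemma sum_ite_inj {α β : Type*} [Fintype α] [DecidableEq β] {e : α → β}
    (he : Function.Injective e) (g : α → ℝ) (a : α) :
    (∑ p, if e p = e a then g p else 0) = g a := by
  rw [Finset.sum_eq_single a]
  · simp
  · intro p _ hpa
    rw [if_neg (fun h => hpa (he h))]
  · intro h; exact absurd (Finset.mem_univ a) h

lemma sum_collapse {α β : Type*} [Fintype α] [Fintype β] [DecidableEq β] {e : α → β}
    (he : Function.Injective e) (g : α → ℝ) (v : β → ℝ) :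
    (∑ q, (∑ p, if e p = q then g p else 0) * v q) = ∑ p, g p * v (e p) := by
  have h1 : ∀ q, (∑ p, if e p = q then g p else 0) * v q
      = ∑ p, if e p = q then g p * v q else 0 := by
    intro q
    rw [Finset.sum_mul]
    exact Finset.sum_congr rfl fun p _ => by split_ifs <;> simp
  rw [Finset.sum_congr rfl fun q _ => h1 q, Finset.sum_comm]
  refine Finset.sum_congr rfl fun p _ => ?_
  rw [Finset.sum_ite_eq Finset.univ (e p) (fun q => g p * v q)]
  simp

lemma finRange_head_tail {k : ℕ} (hk : 0 < k) :
    ∃ rest : List (Fin k), List.finRange k = ⟨0, hk⟩ :: rest ∧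
      ∀ e ∈ rest, (e : ℕ) ≠ 0 := by
  obtain ⟨M, rfl⟩ : ∃ M, k = M + 1 := ⟨k-1, by omega⟩
  refine ⟨(List.finRange M).map Fin.succ, ?_, ?_⟩
  · exact List.finRange_succ
  · intro e he
    simp only [List.mem_map] at he
    obtain ⟨a, _, rfl⟩ := he
    simp

lemma deep_net {m d : ℕ} (L : ℕ) (hL : 1 ≤ L) {ι : Type} [Fintype ι] [DecidableEq ι]
    (c : ι → Fin d → ℝ) (A : ι → Set (Fin m → ℝ)) (G : Set (Fin m → ℝ))
    (ε' : ℝ) (hε : 0 < ε') (hε4 : ε' ≤ 1/4)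
    (s : ι → (Fin m → ℝ) → ℝ) (hol : ∀ j, OneLayer (s j))
    (hG : ∀ x ∈ G, ∀ j, |s j x - Set.indicator (A j) 1 x| ≤ ε') :
    ∃ m₀ : ℕ, ∀ w, m₀ ≤ w → ∃ net : MLP L w m d, ∀ x ∈ G, ∀ i : Fin d,
      |net.eval x i - ∑ j, c j i * Set.indicator (A j) 1 x| ≤ (∑ j, |c j i|) * ε' := by
  classical
  choose n cc aa bb hs using hol
  obtain ⟨K, hK0, hKε⟩ := exists_K ε' hε
  refine ⟨Fintype.card ((j : ι) × Fin (n j)) + Fintype.card ι, fun w hw => ?_⟩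
  obtain ⟨pack⟩ : Nonempty (((j : ι) × Fin (n j)) ↪ Fin w) :=
    Function.Embedding.nonempty_of_card_le
      (by rw [Fintype.card_fin]; exact le_trans (Nat.le_add_right _ _) hw)
  obtain ⟨chan⟩ : Nonempty (ι ↪ Fin w) :=
    Function.Embedding.nonempty_of_card_le
      (by rw [Fintype.card_fin]; exact le_trans (Nat.le_add_left _ _) hw)
  set W1 : Matrix (Fin w) (Fin m) ℝ :=
    fun q j' => ∑ p : (j : ι) × Fin (n j), if pack p = q then aa p.1 p.2 j' else 0 with hW1
  set B1 : Fin w → ℝ :=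
    fun q => ∑ p : (j : ι) × Fin (n j), if pack p = q then bb p.1 p.2 else 0 with hB1
  have hinit : ∀ (x : Fin m → ℝ) (p : (j : ι) × Fin (n j)),
      sigmoid (W1.mulVec x (pack p) + B1 (pack p))
        = sigmoid ((∑ j', aa p.1 p.2 j' * x j') + bb p.1 p.2) := by
    intro x p
    congr 1
    have h1 : W1.mulVec x (pack p) = ∑ j', aa p.1 p.2 j' * x j' := by
      simp only [hW1, Matrix.mulVec, dotProduct]
      refine Finset.sum_congr rfl fun j' _ => ?_
      rw [sum_ite_inj pack.injective (fun p' => aa p'.1 p'.2 j') p]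
    have h2 : B1 (pack p) = bb p.1 p.2 := by
      simp only [hB1]
      exact sum_ite_inj pack.injective (fun p' => bb p'.1 p'.2) p
    rw [h1, h2]
  have hpackj : ∀ j₀ : ι, Function.Injective (fun i : Fin (n j₀) => pack ⟨j₀, i⟩) :=
    fun j₀ => pack.injective.comp sigma_mk_injective
  -- value of the weighted sum of first-layer units along channel weights
  set coefM : ι → Fin w → ℝ :=
    fun j q => ∑ i2, if pack ⟨j, i2⟩ = q then cc j i2 else 0 with hcoefM
  have hsval : ∀ (x : Fin m → ℝ) (j₀ : ι),
      (∑ q, coefM j₀ q * sigmoid (W1.mulVec x q + B1 q)) = s j₀ x := by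
    intro x j₀
    rw [hcoefM]
    rw [sum_collapse (hpackj j₀) (cc j₀) (fun q => sigmoid (W1.mulVec x q + B1 q))]
    rw [hs j₀]
    unfold olf
    refine Finset.sum_congr rfl fun i2 _ => ?_
    rw [hinit x ⟨j₀, i2⟩]
  -- case on depth
  rcases Nat.eq_or_lt_of_le hL with hL1 | hL2
  · -- depth L = 1
    subst hL1
    refine ⟨⟨W1, B1, fun _ => 0, fun _ => 0,
      fun i q => ∑ p : (j : ι) × Fin (n j), if pack p = q then c p.1 i * cc p.1 p.2 else 0,
      0⟩, ?_⟩
    intro x hx i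
    have heval : MLP.eval
        (⟨W1, B1, fun _ => 0, fun _ => 0,
          fun i q => ∑ p : (j : ι) × Fin (n j), if pack p = q then c p.1 i * cc p.1 p.2 else 0,
          0⟩ : MLP 1 w m d) x i
        = ∑ j, c j i * s j x := by
      show (Matrix.mulVec _ ((List.finRange (1-1)).foldl _ _)) i + (0 : Fin d → ℝ) i
        = ∑ j, c j i * s j x
      rw [show List.finRange (1-1) = [] from List.finRange_zero, List.foldl_nil]
      simp only [Pi.zero_apply, add_zero]
      show (∑ q, (∑ p : (j : ι) × Fin (n j), if pack p = q then c p.1 i * cc p.1 p.2 else 0)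
          * sigmoid (W1.mulVec x q + B1 q)) = ∑ j, c j i * s j x
      rw [sum_collapse pack.injective (fun p => c p.1 i * cc p.1 p.2)
        (fun q => sigmoid (W1.mulVec x q + B1 q))]
      rw [← Finset.univ_sigma_univ, Finset.sum_sigma]
      refine Finset.sum_congr rfl fun j₀ _ => ?_
      rw [hs j₀]
      unfold olf
      rw [Finset.mul_sum]
      refine Finset.sum_congr rfl fun i2 _ => ?_
      rw [hinit x ⟨j₀, i2⟩]
      ring
    rw [heval, ← Finset.sum_sub_distrib]
    calc |∑ j, (c j i * s j x - c j i * Set.indicator (A j) 1 x)|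
        ≤ ∑ j, |c j i * s j x - c j i * Set.indicator (A j) 1 x| :=
          Finset.abs_sum_le_sum_abs _ _
      _ ≤ ∑ j, |c j i| * ε' := by
          refine Finset.sum_le_sum fun j _ => ?_
          rw [show c j i * s j x - c j i * Set.indicator (A j) 1 x
            = c j i * (s j x - Set.indicator (A j) 1 x) by ring, abs_mul]
          exact mul_le_mul_of_nonneg_left (hG x hx j) (abs_nonneg _)
      _ = (∑ j, |c j i|) * ε' := (Finset.sum_mul _ _ _).symm
  · -- depth L ≥ 2
    have hLm : 0 < L - 1 := by omega
    set M2 : Matrix (Fin w) (Fin w) ℝ :=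
      fun r q => ∑ j, if chan j = r then K * coefM j q else 0 with hM2
    set Mk : Matrix (Fin w) (Fin w) ℝ :=
      fun r q => ∑ j, if chan j = r then (if q = r then K else 0) else 0 with hMk
    set bK : Fin w → ℝ := fun r => ∑ j, if chan j = r then -(K/2) else 0 with hbK
    set net : MLP L w m d :=
      ⟨W1, B1, fun iL : Fin (L-1) => if (iL : ℕ) = 0 then M2 else Mk, fun _ => bK,
        fun i q => ∑ j, if chan j = q then c j i else 0, 0⟩ with hnet
    refine ⟨net, ?_⟩
    intro x hx i
    set ind : ι → ℝ := fun j => Set.indicator (A j) 1 x with hind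
    have hindb : ∀ j, ind j = 0 ∨ ind j = 1 := by
      intro j
      rw [hind]
      simp only [Set.indicator_apply]
      split_ifs with h
      · right; rfl
      · left; rfl
    -- channel values after each matrix
    have hM2v : ∀ (v : Fin w → ℝ) (j₀ : ι),
        M2.mulVec v (chan j₀) + bK (chan j₀) = K * (∑ q, coefM j₀ q * v q) - K/2 := by
      intro v j₀
      simp only [hM2, hbK, Matrix.mulVec, dotProduct]
      rw [Finset.sum_congr rfl fun q (_ : q ∈ Finset.univ) =>
        congrArg (· * v q) (sum_ite_inj chan.injective (fun j => K * coefM j q) j₀)]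
      rw [sum_ite_inj chan.injective (fun _ => -(K/2)) j₀]
      rw [show (∑ q, K * coefM j₀ q * v q) = K * ∑ q, coefM j₀ q * v q by
        rw [Finset.mul_sum]; exact Finset.sum_congr rfl fun q _ => by ring]
      ring
    have hMkv : ∀ (v : Fin w → ℝ) (j₀ : ι),
        Mk.mulVec v (chan j₀) + bK (chan j₀) = K * v (chan j₀) - K/2 := by
      intro v j₀
      simp only [hMk, hbK, Matrix.mulVec, dotProduct]
      rw [Finset.sum_congr rfl fun q (_ : q ∈ Finset.univ) =>
        congrArg (· * v q) (sum_ite_inj chan.injective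
          (fun j => if q = chan j₀ then K else 0) j₀)]
      rw [sum_ite_inj chan.injective (fun _ => -(K/2)) j₀]
      have h3 : (∑ q, (if q = chan j₀ then K else 0) * v q) = K * v (chan j₀) := by
        simp only [ite_mul, zero_mul]
        rw [Finset.sum_ite_eq' Finset.univ (chan j₀) (fun q => K * v q)]
        simp
      rw [h3]
      ring
    -- the step function of the network
    set step : (Fin w → ℝ) → Fin (L-1) → (Fin w → ℝ) :=
      fun v iL => fun r => sigmoid ((net.wmid iL).mulVec v r + net.bmid iL r) with hstep
    have hwmid : net.wmid = fun iL : Fin (L-1) => if (iL : ℕ) = 0 then M2 else Mk := rfl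
    have hbmid : net.bmid = fun _ => bK := rfl
    have hstep0 : ∀ j, |step (fun q => sigmoid (W1.mulVec x q + B1 q)) ⟨0, hLm⟩ (chan j)
        - ind j| ≤ ε' := by
      intro j
      have h1 : step (fun q => sigmoid (W1.mulVec x q + B1 q)) ⟨0, hLm⟩ (chan j)
          = sigmoid (K * s j x - K/2) := by
        simp only [hstep, hwmid, hbmid]
        split_ifs with hc
        · rw [hM2v, hsval x j]
        · exact absurd trivial hc
      rw [h1]
      refine le_trans (sigmoid_binarize (hindb j) ?_ hK0) hKε
      exact le_trans (hG x hx j) hε4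
    have hsteprest : ∀ iL : Fin (L-1), (iL : ℕ) ≠ 0 → ∀ v,
        (∀ j, |v (chan j) - ind j| ≤ ε') →
        (∀ j, |step v iL (chan j) - ind j| ≤ ε') := by
      intro iL hiL v hv j
      have h1 : step v iL (chan j) = sigmoid (K * v (chan j) - K/2) := by
        simp only [hstep, hwmid, hbmid]
        rw [if_neg hiL, hMkv]
      rw [h1]
      refine le_trans (sigmoid_binarize (hindb j) ?_ hK0) hKε
      exact le_trans (hv j) hε4
    have hfold : ∀ l : List (Fin (L-1)), (∀ e ∈ l, (e : ℕ) ≠ 0) → ∀ v,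
        (∀ j, |v (chan j) - ind j| ≤ ε') →
        (∀ j, |(l.foldl step v) (chan j) - ind j| ≤ ε') := by
      intro l
      induction l with
      | nil => intro _ v hv; simpa using hv
      | cons e l ih =>
        intro he v hv
        rw [List.foldl_cons]
        exact ih (fun f hf => he f (List.mem_cons_of_mem _ hf)) _
          (hsteprest e (he e List.mem_cons_self) v hv)
    obtain ⟨rest, hrest_eq, hrest⟩ := finRange_head_tail hLm
    have hQfinal : ∀ j, |((List.finRange (L-1)).foldl step
        (fun q => sigmoid (W1.mulVec x q + B1 q))) (chan j) - ind j| ≤ ε' := by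
      rw [hrest_eq, List.foldl_cons]
      exact hfold rest hrest _ hstep0
    -- final output
    have heval : net.eval x i
        = ∑ j, c j i * ((List.finRange (L-1)).foldl step
            (fun q => sigmoid (W1.mulVec x q + B1 q))) (chan j) := by
      show (Matrix.mulVec _ _) i + (0 : Fin d → ℝ) i = _
      simp only [Pi.zero_apply, add_zero]
      show (∑ q, (∑ j, if chan j = q then c j i else 0)
          * ((List.finRange (L-1)).foldl step (fun q => sigmoid (W1.mulVec x q + B1 q))) q) = _
      rw [sum_collapse chan.injective (fun j => c j i) _]
    rw [heval, ← Finset.sum_sub_distrib]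
    set vfin := (List.finRange (L-1)).foldl step (fun q => sigmoid (W1.mulVec x q + B1 q))
    calc |∑ j, (c j i * vfin (chan j) - c j i * Set.indicator (A j) 1 x)|
        ≤ ∑ j, |c j i * vfin (chan j) - c j i * Set.indicator (A j) 1 x| :=
          Finset.abs_sum_le_sum_abs _ _
      _ ≤ ∑ j, |c j i| * ε' := by
          refine Finset.sum_le_sum fun j _ => ?_
          rw [show c j i * vfin (chan j) - c j i * Set.indicator (A j) 1 x
            = c j i * (vfin (chan j) - Set.indicator (A j) 1 x) by ring, abs_mul]
          have h9 := hQfinal j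
          rw [hind] at h9
          exact mul_le_mul_of_nonneg_left h9 (abs_nonneg _)
      _ = (∑ j, |c j i|) * ε' := (Finset.sum_mul _ _ _).symm


/-- Continuity of the function computed by an MLP. -/
lemma eval_continuous {L w m d : ℕ} (net : MLP L w m d) : Continuous net.eval := by
  have hmulvec : ∀ {a b : ℕ} (M : Matrix (Fin a) (Fin b) ℝ) (g : (Fin m → ℝ) → (Fin b → ℝ)),
      Continuous g → Continuous fun x => M.mulVec (g x) := by
    intro a b M g hg
    apply continuous_pi
    intro r
    simp only [Matrix.mulVec, dotProduct]
    exact continuous_finset_sum _ fun q _ =>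
      continuous_const.mul ((continuous_apply q).comp hg)
  have hinit : Continuous fun x : Fin m → ℝ =>
      (fun j => sigmoid (net.w1.mulVec x j + net.b1 j)) := by
    apply continuous_pi
    intro j
    apply continuous_sigmoid.comp
    exact ((continuous_apply j).comp (hmulvec net.w1 id continuous_id)).add continuous_const
  have hfold : ∀ (l : List (Fin (L-1))) (g : (Fin m → ℝ) → (Fin w → ℝ)), Continuous g →
      Continuous fun x => l.foldl
        (fun v i => fun j => sigmoid ((net.wmid i).mulVec v j + net.bmid i j)) (g x) := by
    intro l
    induction l with
    | nil => intro g hg; simpa using hg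
    | cons e l ih =>
      intro g hg
      simp only [List.foldl_cons]
      apply ih
      apply continuous_pi
      intro j
      apply continuous_sigmoid.comp
      exact ((continuous_apply j).comp (hmulvec (net.wmid e) g hg)).add continuous_const
  unfold MLP.eval
  apply Continuous.add _ continuous_const
  exact hmulvec net.wout _ (hfold _ _ hinit)

variable {m d : ℕ}

/-- Approximation of set indicators by one-layer networks off a small bad set. -/
lemma indicator_onelayer (μ : Measure (Fin m → ℝ)) [IsProbabilityMeasure μ]
    (A : Set (Fin m → ℝ)) (hA : MeasurableSet A) (ε' δ : ℝ) (hε' : 0 < ε') (hδ : 0 < δ) :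
    ∃ (s : (Fin m → ℝ) → ℝ) (G : Set (Fin m → ℝ)), OneLayer s ∧
      μ Gᶜ < ENNReal.ofReal δ ∧ ∀ x ∈ G, |s x - Set.indicator A 1 x| ≤ ε' := by
  have hδ3 : (0:ℝ≥0∞) < ENNReal.ofReal (δ/3) := by
    rw [ENNReal.ofReal_pos]; linarith
  -- inner/outer regularity
  obtain ⟨K, hKA, hK, hμK⟩ := hA.exists_isCompact_diff_lt (μ := μ) (by simp) hδ3.ne'
  obtain ⟨U, hAU, hU, _, hμU⟩ := hA.exists_isOpen_diff_lt (μ := μ) (by simp) hδ3.ne'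
  -- a big ball
  obtain ⟨Kb, _, hKb, hμKb⟩ :=
    MeasurableSet.univ.exists_isCompact_diff_lt (μ := μ) (by simp) hδ3.ne'
  obtain ⟨R0, hR0⟩ := hKb.isBounded.subset_closedBall 0
  set R : ℝ := max R0 1 with hR_def
  have hRpos : (0:ℝ) < R := lt_of_lt_of_le one_pos (le_max_right _ _)
  have hKbR : Kb ⊆ Metric.closedBall 0 R :=
    subset_trans hR0 (Metric.closedBall_subset_closedBall (le_max_left _ _))
  -- Urysohn
  obtain ⟨φ0, hφ0K, hφ0U, hφ0mem⟩ := exists_continuous_zero_one_of_isCompact hK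
    (isClosed_compl_iff.mpr hU) (by
      rw [Set.disjoint_compl_right_iff_subset]
      exact subset_trans hKA hAU)
  set φ : (Fin m → ℝ) → ℝ := fun x => 1 - φ0 x with hφ_def
  have hφcont : Continuous φ := continuous_const.sub φ0.continuous
  -- network approximation of φ on the ball
  obtain ⟨s, hsOL, hs⟩ := sw_approx φ hφcont R ε' hRpos hε'
  refine ⟨s, Metric.closedBall 0 R \ (U \ K), hsOL, ?_, ?_⟩
  · -- bad set is small
    have hsub : (Metric.closedBall 0 R \ (U \ K))ᶜ
        ⊆ (Set.univ \ Kb) ∪ ((U \ A) ∪ (A \ K)) := by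
      intro x hx
      by_cases hball : x ∈ Metric.closedBall (0 : Fin m → ℝ) R
      · have hUK : x ∈ U \ K := by
          by_contra hUK
          exact hx ⟨hball, hUK⟩
        obtain ⟨hU1, hK1⟩ := hUK
        right
        by_cases hxA : x ∈ A
        · right; exact ⟨hxA, hK1⟩
        · left; exact ⟨hU1, hxA⟩
      · left
        exact ⟨Set.mem_univ x, fun hKb' => hball (hKbR hKb')⟩
    calc μ (Metric.closedBall 0 R \ (U \ K))ᶜ
        ≤ μ ((Set.univ \ Kb) ∪ ((U \ A) ∪ (A \ K))) := measure_mono hsub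
      _ ≤ μ (Set.univ \ Kb) + (μ (U \ A) + μ (A \ K)) :=
          le_trans (measure_union_le _ _) (by
            exact add_le_add le_rfl (measure_union_le _ _))
      _ < ENNReal.ofReal (δ/3) + (ENNReal.ofReal (δ/3) + ENNReal.ofReal (δ/3)) := by
          apply ENNReal.add_lt_add hμKb
          exact ENNReal.add_lt_add hμU hμK
      _ = ENNReal.ofReal (δ/3 + (δ/3 + δ/3)) := by
          rw [ENNReal.ofReal_add (by linarith) (by linarith),
            ENNReal.ofReal_add (by linarith) (by linarith)]
      _ = ENNReal.ofReal δ := by rw [show δ/3 + (δ/3 + δ/3) = δ by ring]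
  · -- approximation on the good set
    intro x hx
    obtain ⟨hxB, hxUK⟩ := hx
    have hφeq : φ x = Set.indicator A 1 x := by
      by_cases hxA : x ∈ A
      · have hxK : x ∈ K := by
          by_contra hxK
          exact hxUK ⟨hAU hxA, hxK⟩
        rw [Set.indicator_of_mem hxA]
        simp only [hφ_def, Pi.one_apply]
        have h0 := hφ0K hxK
        simp only [Pi.zero_apply] at h0
        rw [h0]
        norm_num
      · have hxU : x ∉ U := by
          by_contra hxU
          exact hxUK ⟨hxU, fun hxK => hxA (hKA hxK)⟩
        rw [Set.indicator_of_notMem hxA]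
        simp only [hφ_def]
        have h0 := hφ0U (Set.mem_compl hxU)
        simp only [Pi.one_apply] at h0
        rw [h0]
        norm_num
    rw [← hφeq]
    exact hs x hxB

/-- Network approximability in measure. -/
def NiceApprox (L : ℕ) (μ : Measure (Fin m → ℝ))
    (f : (Fin m → ℝ) → (Fin d → ℝ)) : Prop :=
  ∀ ε δ : ℝ, 0 < ε → 0 < δ → ∃ m₀ : ℕ, ∀ w, m₀ ≤ w → ∃ net : MLP L w m d,
    μ {x | ε < ‖net.eval x - f x‖} < ENNReal.ofReal δ

lemma simple_nice (L : ℕ) (hL : 1 ≤ L) (μ : Measure (Fin m → ℝ)) [IsProbabilityMeasure μ]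
    (g : SimpleFunc (Fin m → ℝ) (Fin d → ℝ)) : NiceApprox L μ g := by
  classical
  intro ε δ hε hδ
  have hrep : ∀ (x : Fin m → ℝ) (i : Fin d),
      g x i = ∑ v : ↥g.range, (v : Fin d → ℝ) i
        * Set.indicator (g ⁻¹' {(v : Fin d → ℝ)}) 1 x := by
    intro x i
    rw [Finset.sum_eq_single (⟨g x, g.mem_range_self x⟩ : ↥g.range)]
    · rw [Set.indicator_of_mem (by exact rfl), Pi.one_apply, mul_one]
    · intro v _ hv
      rw [Set.indicator_of_notMem, mul_zero]
      intro hmem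
      exact hv (Subtype.ext (Set.mem_singleton_iff.mp hmem).symm)
    · intro h
      exact absurd (Finset.mem_univ _) h
  set Cm : ℝ := (∑ v : ↥g.range, ‖(v : Fin d → ℝ)‖) + 1 with hCm
  have hCm0 : 0 ≤ ∑ v : ↥g.range, ‖(v : Fin d → ℝ)‖ :=
    Finset.sum_nonneg fun v _ => norm_nonneg _
  have hCmpos : 0 < Cm := by rw [hCm]; linarith
  set ε' : ℝ := min (1/4) (ε/Cm) with hε'_def
  have hε'pos : 0 < ε' := lt_min (by norm_num) (by positivity)
  have hε'14 : ε' ≤ 1/4 := min_le_left _ _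
  set δv : ℝ := δ / (Fintype.card ↥g.range + 1) with hδv
  have hδvpos : 0 < δv := by rw [hδv]; positivity
  have hind : ∀ v : ↥g.range, ∃ (s : (Fin m → ℝ) → ℝ) (G : Set (Fin m → ℝ)), OneLayer s ∧
      μ Gᶜ < ENNReal.ofReal δv ∧
      ∀ x ∈ G, |s x - Set.indicator (g ⁻¹' {(v : Fin d → ℝ)}) 1 x| ≤ ε' := by
    intro v
    exact indicator_onelayer μ _ (g.measurableSet_fiber _) ε' δv hε'pos hδvpos
  choose s G hsOL hGsmall hGapp using hind
  have hG0small : μ (⋂ v : ↥g.range, G v)ᶜ < ENNReal.ofReal δ := by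
    rw [Set.compl_iInter]
    calc μ (⋃ v : ↥g.range, (G v)ᶜ) ≤ ∑ v : ↥g.range, μ (G v)ᶜ :=
          measure_iUnion_fintype_le _ _
      _ ≤ ∑ _v : ↥g.range, ENNReal.ofReal δv :=
          Finset.sum_le_sum fun v _ => le_of_lt (hGsmall v)
      _ = (Fintype.card ↥g.range : ℝ≥0∞) * ENNReal.ofReal δv := by
          rw [Finset.sum_const, nsmul_eq_mul, Finset.card_univ]
      _ = ENNReal.ofReal (Fintype.card ↥g.range * δv) := by
          rw [ENNReal.ofReal_mul (by positivity), ENNReal.ofReal_natCast]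
      _ < ENNReal.ofReal δ := by
          rw [ENNReal.ofReal_lt_ofReal_iff hδ, hδv]
          rw [div_eq_mul_inv, ← mul_assoc]
          have hcard : (0:ℝ) < (Fintype.card ↥g.range : ℝ) + 1 := by positivity
          rw [show (Fintype.card ↥g.range : ℝ) * δ * ((Fintype.card ↥g.range : ℝ) + 1)⁻¹
            = δ * ((Fintype.card ↥g.range : ℝ) * ((Fintype.card ↥g.range : ℝ) + 1)⁻¹)
            by ring]
          have h2 : (Fintype.card ↥g.range : ℝ)
              * ((Fintype.card ↥g.range : ℝ) + 1)⁻¹ < 1 := by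
            rw [← div_eq_mul_inv, div_lt_one hcard]
            linarith
          nlinarith
  obtain ⟨m₀, hm₀⟩ := deep_net L hL (fun v : ↥g.range => (v : Fin d → ℝ))
    (fun v : ↥g.range => g ⁻¹' {(v : Fin d → ℝ)}) (⋂ v : ↥g.range, G v)
    ε' hε'pos hε'14 s hsOL
    (fun x hx v => hGapp v x (Set.mem_iInter.mp hx v))
  refine ⟨m₀, fun w hw => ?_⟩
  obtain ⟨net, hnet⟩ := hm₀ w hw
  refine ⟨net, ?_⟩
  have hsub : {x | ε < ‖net.eval x - g x‖} ⊆ (⋂ v : ↥g.range, G v)ᶜ := by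
    intro x hx
    simp only [Set.mem_setOf_eq] at hx
    by_contra hxG
    rw [Set.notMem_compl_iff] at hxG
    have hbound : ‖net.eval x - g x‖ ≤ ε := by
      rw [pi_norm_le_iff_of_nonneg (le_of_lt hε)]
      intro i
      rw [Pi.sub_apply, Real.norm_eq_abs, hrep x i]
      calc |net.eval x i - ∑ v : ↥g.range, (v : Fin d → ℝ) i
            * Set.indicator (g ⁻¹' {(v : Fin d → ℝ)}) 1 x|
          ≤ (∑ v : ↥g.range, |(v : Fin d → ℝ) i|) * ε' := hnet x hxG i
        _ ≤ Cm * ε' := by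
            apply mul_le_mul_of_nonneg_right _ (le_of_lt hε'pos)
            rw [hCm]
            have h3 : ∀ v : ↥g.range, |(v : Fin d → ℝ) i| ≤ ‖(v : Fin d → ℝ)‖ := by
              intro v
              rw [← Real.norm_eq_abs]
              exact norm_le_pi_norm _ i
            have h4 := Finset.sum_le_sum (fun v (_ : v ∈ Finset.univ) => h3 v)
            linarith
        _ ≤ Cm * (ε/Cm) := mul_le_mul_of_nonneg_left (min_le_right _ _) (le_of_lt hCmpos)
        _ = ε := by field_simp
    linarith
  exact lt_of_le_of_lt (measure_mono hsub) hG0small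

lemma nice_limit (L : ℕ) (μ : Measure (Fin m → ℝ)) (f : (Fin m → ℝ) → (Fin d → ℝ))
    (g : ℕ → ((Fin m → ℝ) → (Fin d → ℝ)))
    (hg : ∀ k, NiceApprox L μ (g k))
    (hconv : ∀ η δ : ℝ, 0 < η → 0 < δ →
      ∃ k, μ {x | η ≤ ‖g k x - f x‖} < ENNReal.ofReal δ) :
    NiceApprox L μ f := by
  intro ε δ hε hδ
  obtain ⟨k, hk⟩ := hconv (ε/2) (δ/2) (by linarith) (by linarith)
  obtain ⟨m₀, hm₀⟩ := hg k (ε/2) (δ/2) (by linarith) (by linarith)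
  refine ⟨m₀, fun w hw => ?_⟩
  obtain ⟨net, hnet⟩ := hm₀ w hw
  refine ⟨net, ?_⟩
  have hsub : {x | ε < ‖net.eval x - f x‖}
      ⊆ {x | ε/2 < ‖net.eval x - g k x‖} ∪ {x | ε/2 ≤ ‖g k x - f x‖} := by
    intro x hx
    simp only [Set.mem_setOf_eq] at hx
    rw [Set.mem_union]
    by_contra hc
    push_neg at hc
    obtain ⟨h1, h2⟩ := hc
    simp only [Set.mem_setOf_eq, not_lt, not_le] at h1 h2
    have htr := dist_triangle (net.eval x) (g k x) (f x)
    rw [dist_eq_norm, dist_eq_norm, dist_eq_norm] at htr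
    linarith
  calc μ {x | ε < ‖net.eval x - f x‖}
      ≤ μ {x | ε/2 < ‖net.eval x - g k x‖} + μ {x | ε/2 ≤ ‖g k x - f x‖} :=
        le_trans (measure_mono hsub) (measure_union_le _ _)
    _ < ENNReal.ofReal (δ/2) + ENNReal.ofReal (δ/2) := ENNReal.add_lt_add hnet hk
    _ = ENNReal.ofReal δ := by
        rw [← ENNReal.ofReal_add (by linarith) (by linarith)]
        rw [show δ/2 + δ/2 = δ by ring]

lemma measurable_nice (L : ℕ) (hL : 1 ≤ L) (μ : Measure (Fin m → ℝ))
    [IsProbabilityMeasure μ]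
    (f : (Fin m → ℝ) → (Fin d → ℝ)) (hf : Measurable f) : NiceApprox L μ f := by
  have h0 : (0 : Fin d → ℝ) ∈ Set.univ := Set.mem_univ _
  set g : ℕ → SimpleFunc (Fin m → ℝ) (Fin d → ℝ) :=
    SimpleFunc.approxOn f hf Set.univ 0 h0 with hg
  have hptw : ∀ x, Tendsto (fun k => g k x) atTop (nhds (f x)) := by
    intro x
    apply SimpleFunc.tendsto_approxOn hf h0
    rw [closure_univ]
    exact Set.mem_univ _
  have hmeas : TendstoInMeasure μ (fun k => ⇑(g k)) atTop f :=
    tendstoInMeasure_of_tendsto_ae (fun k => (g k).aestronglyMeasurable)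
      (Filter.Eventually.of_forall hptw)
  apply nice_limit L μ f (fun k => ⇑(g k)) (fun k => simple_nice L hL μ (g k))
  intro η δ hη hδ
  have h1 := hmeas (ENNReal.ofReal η) (by rw [ENNReal.ofReal_pos]; exact hη)
  have h2 : ∀ᶠ k in atTop,
      μ {x | ENNReal.ofReal η ≤ edist (g k x) (f x)} < ENNReal.ofReal δ :=
    h1.eventually_lt_const (by rw [ENNReal.ofReal_pos]; exact hδ)
  obtain ⟨k, hk⟩ := h2.exists
  refine ⟨k, ?_⟩
  have hset : {x | η ≤ ‖g k x - f x‖} = {x | ENNReal.ofReal η ≤ edist (g k x) (f x)} := by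
    ext x
    simp only [Set.mem_setOf_eq, edist_dist, dist_eq_norm]
    exact (ENNReal.ofReal_le_ofReal_iff (norm_nonneg _)).symm
  rw [hset]
  exact hk

/-- The all-zero network. -/
def trivialMLP (L w m d : ℕ) : MLP L w m d :=
  ⟨fun _ _ => 0, fun _ => 0, fun _ _ _ => 0, fun _ _ => 0, fun _ _ => 0, fun _ => 0⟩


end UAux

open UAux in
/-- Universal approximation for a random input: for any Borel measurable target `f`
and any random input `X`, there is a sequence of FNNs `F n ∈ Q_n` with
`F n (X) → f (X)` in probability. -/
theorem universal_approximation_random_input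
    {Ω : Type*} [MeasurableSpace Ω] (P : Measure Ω) [IsProbabilityMeasure P]
    (ν₀ d : ℕ)
    (X : Ω → (Fin ν₀ → ℝ)) (hX : Measurable X)
    (f : (Fin ν₀ → ℝ) → (Fin d → ℝ)) (hf : Measurable f)
    (L : ℕ) (hL : 1 ≤ L)
    (ν : ℕ → ℕ) (hν : StrictMono ν) (hν' : Tendsto ν atTop atTop) :
    ∃ F : ℕ → ((Fin ν₀ → ℝ) → (Fin d → ℝ)),
      (∀ n, InQ L ν n ν₀ d (F n)) ∧
      ∀ ε : ℝ, 0 < ε →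
        Tendsto (fun n => P {ω | ε < ‖F n (X ω) - f (X ω)‖}) atTop (nhds 0) := by
  classical
  set μ : Measure (Fin ν₀ → ℝ) := P.map X with hμ
  haveI : IsProbabilityMeasure μ := Measure.isProbabilityMeasure_map hX.aemeasurable
  have hnice := measurable_nice L hL μ f hf
  have hspec : ∀ j : ℕ, ∃ m₀ : ℕ, ∀ w, m₀ ≤ w → ∃ net : MLP L w ν₀ d,
      μ {x | 1/(j+1 : ℝ) < ‖net.eval x - f x‖} < ENNReal.ofReal (1/(j+1 : ℝ)) := by
    intro j
    exact hnice (1/(j+1)) (1/(j+1)) (by positivity) (by positivity)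
  choose m0 hm0 using hspec
  choose netf hnetf using hm0
  set M : ℕ → ℕ := fun j => (Finset.range (j+1)).sup m0 with hM
  have hm0M : ∀ j, m0 j ≤ M j := fun j =>
    Finset.le_sup (Finset.mem_range.mpr (by omega))
  set jsel : ℕ → ℕ := fun n => Nat.findGreatest (fun j => M j ≤ ν n) n with hjsel
  refine ⟨fun n =>
    if h : M (jsel n) ≤ ν n then (netf (jsel n) (ν n) (le_trans (hm0M _) h)).eval
    else (trivialMLP L (ν n) ν₀ d).eval, ?_, ?_⟩
  · intro n
    dsimp only
    split_ifs with h
    · exact ⟨_, rfl⟩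
    · exact ⟨_, rfl⟩
  · intro ε hε
    rw [ENNReal.tendsto_nhds_zero]
    intro η hη
    obtain ⟨r, hr0, hrη⟩ : ∃ r : ℝ, 0 < r ∧ ENNReal.ofReal r ≤ η := by
      rcases eq_top_or_lt_top η with h | h
      · exact ⟨1, one_pos, by simp [h]⟩
      · refine ⟨η.toReal, ENNReal.toReal_pos (ne_of_gt hη) (ne_of_lt h), ?_⟩
        rw [ENNReal.ofReal_toReal (ne_of_lt h)]
    have hmin : 0 < min r ε := lt_min hr0 hε
    obtain ⟨J, hJgt⟩ := exists_nat_gt (1 / min r ε)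
    have hJlt : 1/(J+1 : ℝ) < min r ε := by
      rw [div_lt_iff₀ (by positivity)]
      have h5 : 1 / min r ε < (J+1 : ℝ) := lt_trans hJgt (by linarith)
      rw [div_lt_iff₀ hmin] at h5
      linarith [mul_comm (min r ε) ((J:ℝ)+1)]
    have hev1 : ∀ᶠ n in atTop, M J ≤ ν n := hν'.eventually (eventually_ge_atTop (M J))
    have hev2 : ∀ᶠ n in atTop, J ≤ n := eventually_ge_atTop J
    filter_upwards [hev1, hev2] with n h1 h2
    have hprop : M (jsel n) ≤ ν n := Nat.findGreatest_spec (P := fun j => M j ≤ ν n) h2 h1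
    have hJle : J ≤ jsel n := Nat.le_findGreatest h2 h1
    set net := netf (jsel n) (ν n) (le_trans (hm0M _) hprop) with hnet_def
    have hkey := hnetf (jsel n) (ν n) (le_trans (hm0M _) hprop)
    -- the function is the chosen network
    have hFn : (if h : M (jsel n) ≤ ν n
        then (netf (jsel n) (ν n) (le_trans (hm0M _) h)).eval
        else (trivialMLP L (ν n) ν₀ d).eval) = net.eval := by
      rw [dif_pos hprop]
    rw [hFn]
    -- measurability
    have hSm : ∀ c : ℝ, MeasurableSet {x | c < ‖net.eval x - f x‖} := by
      intro c
      exact measurableSet_lt measurable_const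
        (((eval_continuous net).measurable.sub hf).norm)
    have hPμ : P {ω | ε < ‖net.eval (X ω) - f (X ω)‖}
        = μ {x | ε < ‖net.eval x - f x‖} := by
      rw [hμ, Measure.map_apply hX (hSm ε)]
      rfl
    rw [hPμ]
    have hcast : (1:ℝ)/(jsel n + 1) ≤ 1/(J+1 : ℝ) := by
      apply one_div_le_one_div_of_le (by positivity)
      have : (J:ℝ) ≤ jsel n := Nat.cast_le.mpr hJle
      linarith
    have hsub2 : {x | ε < ‖net.eval x - f x‖}
        ⊆ {x | 1/(jsel n + 1 : ℝ) < ‖net.eval x - f x‖} := by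
      intro x hx
      simp only [Set.mem_setOf_eq] at hx ⊢
      have : (1:ℝ)/(jsel n + 1) < ε :=
        lt_of_le_of_lt hcast (lt_of_lt_of_le hJlt (min_le_right _ _))
      linarith
    refine le_of_lt ?_
    calc μ {x | ε < ‖net.eval x - f x‖}
        ≤ μ {x | 1/(jsel n + 1 : ℝ) < ‖net.eval x - f x‖} := measure_mono hsub2
      _ < ENNReal.ofReal (1/(jsel n + 1 : ℝ)) := hkey
      _ ≤ ENNReal.ofReal r := by
          apply ENNReal.ofReal_le_ofReal
          exact le_trans hcast (le_trans (le_of_lt hJlt) (min_le_left _ _))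
      _ ≤ η := hrη
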